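/- Let t ≥ 3 and l ≥ 1 be integers and let G be a member of the family 𝖦(t,l) with partition classes V_0, …, V_t. Then the map that sends every vertex of V_m to the integer m (for each 0 ≤ m ≤ t) is a lambda colouring of G. -/
import Mathlib


/-- A lambda colouring (`L(2,1)`-colouring) of a simple graph: adjacent vertices get
values at least 2 apart, and vertices at distance 2 get distinct values. -/
def IsLambdaColoring {V : Type*} (G : SimpleGraph V) (c : V → ℕ) : Prop :=
  (∀ u v, G.Adj u v → 2 ≤ Nat.dist (c u) (c v)) ∧
  (∀ u v, G.dist u v = 2 → c u ≠ c v)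

/-- The lambda chromatic number: the minimum over all lambda colourings of the
maximum assigned value. -/
noncomputable def lambdaChromatic {V : Type*} [Fintype V] (G : SimpleGraph V) : ℕ :=
  sInf {t : ℕ | ∃ c : V → ℕ, IsLambdaColoring G c ∧ ∀ v, c v ≤ t}

/-- `G` is a member of the family `𝖦(t,l)` with partition `part : V → {0,…,t}`:
each class has size `l`; edges only join classes `m, p` with `|m − p| ≥ 2`; and between
any two such classes, the edges form a perfect matching. -/
def MemGFamily {V : Type*} (G : SimpleGraph V) (t l : ℕ) (part : V → ℕ) : Prop :=
  (∀ v, part v ≤ t) ∧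
  (∀ m ≤ t, {v | part v = m}.ncard = l) ∧
  (∀ u v, G.Adj u v → 2 ≤ Nat.dist (part u) (part v)) ∧
  (∀ m p, m ≤ t → p ≤ t → 2 ≤ Nat.dist m p →
    ∀ x, part x = m → ∃! y, part y = p ∧ G.Adj x y)

/-- For a member `G` of `𝖦(t,l)` with partition classes `V_0, …, V_t`, the map sending
every vertex of `V_m` to `m` is a lambda colouring of `G`. -/
theorem stmt_2 {V : Type*} [Fintype V] (G : SimpleGraph V) (t l : ℕ)
    (ht : 3 ≤ t) (hl : 1 ≤ l) (part : V → ℕ) (hG : MemGFamily G t l part) :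
    IsLambdaColoring G part := by
  obtain ⟨hle, _, hadj, hmatch⟩ := hG
  refine ⟨hadj, ?_⟩
  intro u v hd heq
  have hne : u ≠ v := by
    intro h; subst h; simp [SimpleGraph.dist_self] at hd
  obtain ⟨p, hp⟩ := G.exists_walk_of_dist_ne_zero (by rw [hd]; exact two_ne_zero)
  rw [hd] at hp
  match p, hp with
  | SimpleGraph.Walk.cons (v := w) h1 (SimpleGraph.Walk.cons h2 SimpleGraph.Walk.nil), _ =>
    have h2' : G.Adj w v := h2
    have hdist : 2 ≤ Nat.dist (part w) (part u) := by
      have := hadj u w h1; rwa [Nat.dist_comm]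
    obtain ⟨y, _, hy⟩ := hmatch (part w) (part u) (hle w) (hle u) hdist w rfl
    have hu := hy u ⟨rfl, h1.symm⟩
    have hv := hy v ⟨heq.symm, h2'⟩
    exact hne (hu.trans hv.symm)
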